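/- Let F be a function from finite multisets of non-negative integers to ℚ satisfying: (initial condition) F(∅) = 1; (divisor equation) for every finite multiset s of non-negative integers, F(0 :: s) = (1 + Σs)·F(s), where Σs denotes the sum of the elements of s and 0 :: s denotes s with one copy of 0 added; and (topological recursion) for every n ≥ 2 and all a_1,…,a_n ∈ ℕ, F(a_1+1, a_2, …, a_n) = ∑_{(I,J)} (1 + ∑_{j∈J} a_j) · F((a_i)_{i∈I}) · F((a_j)_{j∈J}), the sum being over all pairs (I,J) of disjoint sets with I ∪ J = {1,…,n}, 1 ∈ I and n ∈ J. Then for every n ≥ 0 and all a_1,…,a_n ∈ ℕ, F(a_1,…,a_n) = (1 + ∑_{i=1}^n a_i)^{n−2} / ∏_{i=1}^n a_i!, where the power is taken in ℚ with integer exponent n−2 (possibly negative). -/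

import Mathlib

open Polynomial


lemma comp_linear_ne {P : ℚ[X]} (hP : P ≠ 0) (b : ℚ) : P.comp (X + C b) ≠ 0 := by
  intro h
  apply hP
  apply Polynomial.funext
  intro r
  have := congrArg (Polynomial.eval (r - b)) h
  simpa [Polynomial.eval_comp] using this

lemma findiff {ι : Type*} [DecidableEq ι] (w : ι → ℚ) :
    ∀ (K : Finset ι) (P : ℚ[X]), P.degree < (K.card : ℕ) → ∀ x : ℚ,
      ∑ T ∈ K.powerset, (-1 : ℚ)^T.card * P.eval (x + ∑ i ∈ T, w i) = 0 := by
  intro K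
  induction K using Finset.induction with
  | empty =>
      intro P hP x
      have : P = 0 := by
        rw [← Polynomial.degree_eq_bot]
        simpa [Nat.WithBot.lt_zero_iff] using hP
      simp [this]
  | @insert a K ha ih =>
      intro P hP x
      by_cases hP0 : P = 0
      · simp [hP0]
      set Q : ℚ[X] := P.comp (X + C (w a)) - P with hQ
      have hcompne : P.comp (X + C (w a)) ≠ 0 := comp_linear_ne hP0 (w a)
      have hdegeq : (P.comp (X + C (w a))).degree = P.degree := by
        rw [Polynomial.degree_eq_natDegree hcompne, Polynomial.degree_eq_natDegree hP0]
        norm_cast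
        simp [Polynomial.natDegree_comp, Polynomial.natDegree_X_add_C]
      have hQval : ∀ t : ℚ, Q.eval t = P.eval (t + w a) - P.eval t := by
        intro t; simp [hQ, Polynomial.eval_comp]
      have hdegQ : Q.degree < (K.card : ℕ) := by
        have hdlt : Q.degree < P.degree := by
          have := Polynomial.degree_sub_lt hdegeq hcompne
            (by rw [Polynomial.leadingCoeff_comp (by simp [Polynomial.natDegree_X_add_C])]; simp)
          rwa [hdegeq] at this
        have hnat : P.natDegree < K.card + 1 := by
          rw [Polynomial.natDegree_lt_iff_degree_lt hP0]
          simpa [Finset.card_insert_of_notMem ha] using hP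
        calc Q.degree < P.degree := hdlt
          _ ≤ (K.card : ℕ) := by
              rw [Polynomial.degree_eq_natDegree hP0]
              exact_mod_cast Nat.lt_succ_iff.mp hnat
      have key := ih Q hdegQ x
      rw [Finset.sum_powerset_insert ha]
      have h2 : ∀ T ∈ K.powerset,
          (-1 : ℚ)^(insert a T).card * P.eval (x + ∑ i ∈ insert a T, w i)
            = -((-1:ℚ)^T.card * P.eval ((x + ∑ i ∈ T, w i) + w a)) := by
        intro T hT
        have haT : a ∉ T := fun h => ha (Finset.mem_powerset.mp hT h)
        rw [Finset.card_insert_of_notMem haT, Finset.sum_insert haT]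
        ring_nf
      rw [Finset.sum_congr rfl h2, ← Finset.sum_add_distrib]
      have h3 : ∀ T ∈ K.powerset,
          ((-1 : ℚ)^T.card * P.eval (x + ∑ i ∈ T, w i)
            + -((-1:ℚ)^T.card * P.eval ((x + ∑ i ∈ T, w i) + w a)))
          = -((-1:ℚ)^T.card * Q.eval (x + ∑ i ∈ T, w i)) := by
        intro T _
        rw [hQval]
        ring
      rw [Finset.sum_congr rfl h3, Finset.sum_neg_distrib, key, neg_zero]

noncomputable def gg {ι : Type*} [DecidableEq ι] (w : ι → ℚ) (x : ℚ) (T : Finset ι) : ℚ :=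
  if T = ∅ then 1 else x * (x + ∑ i ∈ T, w i)^(T.card - 1)

lemma neg_one_pow_sub (m k : ℕ) (h : k ≤ m) : ((-1 : ℚ))^(m - k) = (-1)^m * (-1)^k := by
  have h2 : m + k = (m - k) + 2*k := by omega
  have h3 : ((-1 : ℚ))^(m) * (-1)^k = (-1)^(m+k) := by rw [pow_add]
  rw [h3, h2, pow_add, pow_mul]
  simp

lemma hurwitz {ι : Type*} [DecidableEq ι] (w : ι → ℚ) :
    ∀ (n : ℕ) (K : Finset ι), K.card = n → ∀ x y : ℚ,
      ∑ T ∈ K.powerset, gg w x T * (y + ∑ i ∈ K \ T, w i)^((K \ T).card)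
        = (x + y + ∑ i ∈ K, w i)^K.card := by
  intro n
  induction n using Nat.strong_induction_on with
  | _ n ih =>
  intro K hK x y
  rcases Nat.eq_zero_or_pos n with hn | hn
  · rw [hn, Finset.card_eq_zero] at hK
    subst hK
    simp [gg]
  have hKpos : 0 < K.card := hK ▸ hn
  set SK := ∑ i ∈ K, w i with hSK
  set p : ℚ[X] := ∑ T ∈ K.powerset, C (gg w x T) * (X + C (∑ i ∈ K \ T, w i))^((K \ T).card) with hp
  set q : ℚ[X] := (X + C (x + SK))^(K.card) with hq
  have evp : ∀ r : ℚ, p.eval r = ∑ T ∈ K.powerset, gg w x T * (r + ∑ i ∈ K \ T, w i)^((K \ T).card) := by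
    intro r
    rw [hp, Polynomial.eval_finset_sum]
    simp only [eval_mul, eval_pow, eval_add, eval_X, eval_C]
  have evq : ∀ r : ℚ, q.eval r = (x + r + SK)^(K.card) := by
    intro r
    rw [hq]
    simp only [eval_pow, eval_add, eval_X, eval_C]
    ring_nf
  suffices hpq : p = q by
    rw [← evp y, ← evq y, hpq]
  -- derivative computation
  have hder : derivative p = derivative q := by
    have hq' : derivative q = C (K.card : ℚ) * (X + C (x + SK))^(K.card - 1) := by
      rw [hq, Polynomial.derivative_pow]
      simp
    have hp' : derivative p
        = ∑ T ∈ K.powerset, C (((K \ T).card : ℚ)) *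
            (C (gg w x T) * (X + C (∑ i ∈ K \ T, w i))^((K \ T).card - 1)) := by
      rw [hp, map_sum]
      apply Finset.sum_congr rfl
      intro T _
      rw [Polynomial.derivative_C_mul, Polynomial.derivative_pow]
      simp
      ring
    rw [hp', hq']
    have step1 : ∀ T ∈ K.powerset, C (((K \ T).card : ℚ)) *
            (C (gg w x T) * (X + C (∑ i ∈ K \ T, w i))^((K \ T).card - 1))
        = ∑ e ∈ K \ T,
            C (gg w x T) * (X + C (∑ i ∈ K \ T, w i))^((K \ T).card - 1) := by
      intro T _
      rw [Finset.sum_const, nsmul_eq_mul, ← Polynomial.C_eq_natCast]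
    rw [Finset.sum_congr rfl step1]
    -- swap sums
    have step2 : (∑ T ∈ K.powerset, ∑ e ∈ K \ T,
            C (gg w x T) * (X + C (∑ i ∈ K \ T, w i))^((K \ T).card - 1))
        = ∑ e ∈ K, ∑ T ∈ (K.erase e).powerset,
            C (gg w x T) * (X + C (∑ i ∈ K \ T, w i))^((K \ T).card - 1) := by
      apply Finset.sum_comm'
      intro T e
      simp only [Finset.mem_powerset, Finset.mem_sdiff, Finset.mem_erase, Finset.subset_erase]
      tauto
    rw [step2]
    -- inner sum via IH
    have step3 : ∀ e ∈ K, (∑ T ∈ (K.erase e).powerset,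
            C (gg w x T) * (X + C (∑ i ∈ K \ T, w i))^((K \ T).card - 1))
        = (X + C (x + SK))^(K.card - 1) := by
      intro e he
      set K' := K.erase e with hK'
      have hcard' : K'.card = K.card - 1 := Finset.card_erase_of_mem he
      have hlt : K'.card < K.card := by
        rw [hcard']; omega
      apply Polynomial.funext
      intro r
      rw [Polynomial.eval_finset_sum]
      have inner : ∀ T ∈ K'.powerset,
          (C (gg w x T) * (X + C (∑ i ∈ K \ T, w i))^((K \ T).card - 1)).eval r
          = gg w x T * ((r + w e) + ∑ i ∈ K' \ T, w i)^((K' \ T).card) := by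
        intro T hT
        have hTK' : T ⊆ K' := Finset.mem_powerset.mp hT
        have heT : e ∉ T := fun h => (Finset.mem_erase.mp (hTK' h)).1 rfl
        have hsd : K \ T = insert e (K' \ T) := by
          rw [hK']
          ext i
          simp only [Finset.mem_sdiff, Finset.mem_insert, Finset.mem_erase]
          constructor
          · rintro ⟨hiK, hiT⟩
            by_cases hie : i = e
            · left; exact hie
            · right; exact ⟨⟨hie, hiK⟩, hiT⟩
          · rintro (rfl | ⟨⟨hie, hiK⟩, hiT⟩)
            · exact ⟨he, heT⟩
            · exact ⟨hiK, hiT⟩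
        have heK' : e ∉ K' \ T := fun h => (Finset.mem_erase.mp (Finset.mem_sdiff.mp h).1).1 rfl
        rw [hsd, Finset.sum_insert heK', Finset.card_insert_of_notMem heK']
        simp only [eval_mul, eval_pow, eval_add, eval_X, eval_C, Nat.add_sub_cancel]
        ring_nf
      rw [Finset.sum_congr rfl inner]
      have := ih K'.card (hK ▸ hlt) K' rfl x (r + w e)
      rw [this]
      have hsum : x + (r + w e) + ∑ i ∈ K', w i = x + r + SK := by
        rw [hSK, hK']
        have : ∑ i ∈ K, w i = w e + ∑ i ∈ K.erase e, w i := (Finset.add_sum_erase K w he).symm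
        rw [this]
        ring
      rw [hsum, hcard']
      simp only [eval_pow, eval_add, eval_X, eval_C]
      ring_nf
    rw [Finset.sum_congr rfl step3, Finset.sum_const, nsmul_eq_mul, ← Polynomial.C_eq_natCast]
  -- from equal derivatives to equality
  have hd0 : derivative (p - q) = 0 := by rw [map_sub, hder, sub_self]
  have hconst : p - q = C ((p - q).coeff 0) :=
    Polynomial.eq_C_of_natDegree_eq_zero (Polynomial.natDegree_eq_zero_of_derivative_eq_zero hd0)
  -- evaluate at y₀
  set y₀ : ℚ := -(x + SK) with hy₀
  have evq0 : q.eval y₀ = 0 := by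
    rw [evq, hy₀]
    rw [show x + -(x + SK) + SK = 0 by ring]
    exact zero_pow hKpos.ne'  
  have evp0 : p.eval y₀ = 0 := by
    rw [evp]
    have term : ∀ T ∈ K.powerset,
        gg w x T * (y₀ + ∑ i ∈ K \ T, w i)^((K \ T).card)
        = ((-1:ℚ)^(K.card) * x) * ((-1:ℚ)^T.card * Polynomial.eval (x + ∑ i ∈ T, w i) (X^(K.card - 1))) := by
      intro T hT
      have hTK : T ⊆ K := Finset.mem_powerset.mp hT
      have hcardle : T.card ≤ K.card := Finset.card_le_card hTK
      have hsub : (∑ i ∈ K \ T, w i) = SK - ∑ i ∈ T, w i := by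
        rw [hSK, ← Finset.sum_sdiff hTK]
        ring
      rw [hsub, Finset.card_sdiff_of_subset hTK]
      rw [show y₀ + (SK - ∑ i ∈ T, w i) = -(x + ∑ i ∈ T, w i) by rw [hy₀]; ring]
      rw [neg_pow, neg_one_pow_sub K.card T.card hcardle]
      simp only [eval_pow, eval_X]
      have hggpow : gg w x T * (x + ∑ i ∈ T, w i)^(K.card - T.card) = x * (x + ∑ i ∈ T, w i)^(K.card - 1) := by
        by_cases hTe : T = ∅
        · subst hTe
          rw [gg, if_pos rfl, one_mul]
          rw [Finset.sum_empty, Finset.card_empty, add_zero, Nat.sub_zero]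
          rw [← pow_succ']
          congr 1
          omega
        · rw [gg, if_neg hTe]
          have hT1 : 1 ≤ T.card := Finset.card_pos.mpr (Finset.nonempty_iff_ne_empty.mpr hTe)
          rw [mul_assoc, ← pow_add]
          congr 2
          omega
      calc gg w x T * ((-1:ℚ)^K.card * (-1:ℚ)^T.card * (x + ∑ i ∈ T, w i)^(K.card - T.card))
          = ((-1:ℚ)^K.card * (-1:ℚ)^T.card) * (gg w x T * (x + ∑ i ∈ T, w i)^(K.card - T.card)) := by ring
        _ = ((-1:ℚ)^K.card * (-1:ℚ)^T.card) * (x * (x + ∑ i ∈ T, w i)^(K.card - 1)) := by rw [hggpow]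
        _ = (-1:ℚ)^K.card * x * ((-1:ℚ)^T.card * (x + ∑ i ∈ T, w i)^(K.card - 1)) := by ring
    rw [Finset.sum_congr rfl term, ← Finset.mul_sum]
    have hdeg : (X^(K.card - 1) : ℚ[X]).degree < (K.card : ℕ) := by
      rw [Polynomial.degree_X_pow]
      exact_mod_cast Nat.sub_lt hKpos one_pos
    rw [findiff w K (X^(K.card-1)) hdeg x, mul_zero]
  have : (p - q).coeff 0 = 0 := by
    have := congrArg (Polynomial.eval y₀) hconst
    simp only [eval_sub, eval_C] at this
    rw [evp0, evq0] at this
    simpa using this.symm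
  have : p - q = 0 := by rw [hconst, this, map_zero]
  exact sub_eq_zero.mp this

lemma hurwitz_zpow {ι : Type*} [DecidableEq ι] (w : ι → ℚ) (K : Finset ι) (x y : ℚ)
    (hx : x ≠ 0) :
    ∑ T ∈ K.powerset, (x + ∑ i ∈ T, w i)^((T.card : ℤ) - 1) * (y + ∑ i ∈ K \ T, w i)^((K \ T).card)
      = (x + y + ∑ i ∈ K, w i)^K.card / x := by
  rw [← hurwitz w K.card K rfl x y, Finset.sum_div]
  apply Finset.sum_congr rfl
  intro T _
  rw [mul_div_right_comm]
  congr 1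
  by_cases hT : T = ∅
  · subst hT
    simp only [gg, if_pos rfl, Finset.card_empty, Finset.sum_empty, add_zero]
    rw [zpow_sub_one₀ hx]
    simp [one_div]
  · rw [gg, if_neg hT]
    have h1 : 1 ≤ T.card := Finset.card_pos.mpr (Finset.nonempty_iff_ne_empty.mpr hT)
    have : (T.card : ℤ) - 1 = ((T.card - 1 : ℕ) : ℤ) := by omega
    rw [this, zpow_natCast, mul_comm x _, mul_div_assoc]
    rw [div_self hx, mul_one]

lemma finset_as_map {n : ℕ} (I : Finset (Fin n)) :
    ∃ e : Fin I.card ↪ Fin n, Finset.map e Finset.univ = I := by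
  refine ⟨⟨fun j => (I.orderIsoOfFin rfl j : Fin n), ?_⟩, ?_⟩
  · intro j1 j2 h
    exact (I.orderIsoOfFin rfl).injective (Subtype.ext h)
  · ext y
    simp only [Finset.mem_map, Finset.mem_univ, true_and, Function.Embedding.coeFn_mk]
    constructor
    · rintro ⟨j, rfl⟩
      exact (I.orderIsoOfFin rfl j).2
    · intro hy
      exact ⟨(I.orderIsoOfFin rfl).symm ⟨y, hy⟩, congrArg Subtype.val ((I.orderIsoOfFin rfl).apply_symm_apply ⟨y, hy⟩)⟩


lemma ms0 {n : ℕ} (a : Fin (n+1) → ℕ) :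
    (Finset.univ : Finset (Fin (n+1))).val.map a
      = a 0 ::ₘ (Finset.univ.erase 0).val.map a := by
  conv_lhs => rw [← Multiset.cons_erase (show (0:Fin (n+1)) ∈ Finset.univ.val by simp)]
  rw [Multiset.map_cons, Finset.erase_val]

lemma erase_univ_succ {n : ℕ} :
    (Finset.univ.erase (0 : Fin (n+1)))
      = Finset.map ⟨Fin.succ, Fin.succ_injective n⟩ Finset.univ := by
  ext y
  simp only [Finset.mem_erase, Finset.mem_univ, and_true, Finset.mem_map,
    Function.Embedding.coeFn_mk, true_and]
  constructor
  · intro hy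
    exact ⟨y.pred hy, by simp⟩
  · rintro ⟨z, rfl⟩
    exact Fin.succ_ne_zero z

lemma erase_map_succ {n : ℕ} (a : Fin (n+1) → ℕ) :
    (Finset.univ.erase (0 : Fin (n+1))).val.map a
      = (Finset.univ : Finset (Fin n)).val.map (a ∘ Fin.succ) := by
  rw [erase_univ_succ, Finset.map_val, Multiset.map_map]
  rfl

lemma msum_cast {n : ℕ} (g : Fin n → ℕ) :
    (((Finset.univ : Finset (Fin n)).val.map g).sum : ℚ) = ∑ j, (g j : ℚ) := by
  rw [show ((Finset.univ : Finset (Fin n)).val.map g).sum = ∑ j, g j from rfl]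
  push_cast
  rfl

lemma singletons (F : Multiset ℕ → ℚ)
    (h_init : F 0 = 1)
    (h_div : ∀ s : Multiset ℕ, F (0 ::ₘ s) = (1 + (s.sum : ℚ)) * F s)
    (h_trr : ∀ (n : ℕ) (a : Fin (n + 2) → ℕ),
      F ((a 0 + 1) ::ₘ (Finset.univ.erase (0 : Fin (n + 2))).val.map a) =
        ∑ I ∈ Finset.univ.filter
            (fun I : Finset (Fin (n + 2)) => 0 ∈ I ∧ Fin.last (n + 1) ∉ I),
          (1 + ∑ j ∈ Iᶜ, (a j : ℚ)) * F (I.val.map a) * F (Iᶜ.val.map a)) :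
    ∀ k : ℕ, F {k} = (1 + (k:ℚ))⁻¹ / (Nat.factorial k : ℚ) := by
  intro k
  induction k with
  | zero =>
      have := h_div 0
      simp only [Multiset.sum_zero, Nat.cast_zero, add_zero, one_mul, h_init] at this
      simpa using this
  | succ k ihk =>
      have F0 : F {0} = 1 := by
        have := h_div 0
        simp only [Multiset.sum_zero, Nat.cast_zero, add_zero, one_mul, h_init] at this
        simpa using this
      have e1 := h_trr 0 ![k, 0]
      have hmap1 : ((Finset.univ.erase (0 : Fin 2)).val.map ![k,0]) = ({0} : Multiset ℕ) := by
        have : (Finset.univ.erase (0 : Fin 2)).val = {1} := by decide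
        rw [this]; simp
      have hfil : (Finset.univ.filter (fun I : Finset (Fin 2) => 0 ∈ I ∧ Fin.last 1 ∉ I))
          = {{0}} := by decide
      rw [hmap1, hfil, Finset.sum_singleton] at e1
      have hc : (({0} : Finset (Fin 2))ᶜ) = {1} := by decide
      rw [hc] at e1
      have hm2 : (({0} : Finset (Fin 2)).val.map ![k,0]) = ({k} : Multiset ℕ) := by simp
      have hm3 : (({1} : Finset (Fin 2)).val.map ![k,0]) = ({0} : Multiset ℕ) := by simp
      rw [hm2, hm3] at e1
      simp only [Finset.sum_singleton] at e1
      have hm4 : (![k,0] 1 : ℚ) = 0 := by simp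
      rw [hm4] at e1
      have hv : (![k,0] 0) = k := rfl
      rw [hv] at e1
      -- e1 : F ((k+1) ::ₘ {0}) = (1 + 0) * F {k} * F {0}
      have e2 := h_div {k+1}
      have hsw : ((k+1) ::ₘ ({0} : Multiset ℕ)) = 0 ::ₘ ({k+1} : Multiset ℕ) := by
        rw [show ({0} : Multiset ℕ) = 0 ::ₘ 0 from rfl, Multiset.cons_swap]
        rfl
      rw [hsw, e2] at e1
      rw [F0, ihk] at e1
      have hsum : (({k+1} : Multiset ℕ).sum : ℚ) = (k:ℚ) + 1 := by
        simp [Multiset.sum_singleton]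
      rw [hsum] at e1
      have hne1 : (1 + ((k:ℚ)+1)) ≠ 0 := by positivity
      have hne2 : (1 + (k:ℚ)) ≠ 0 := by positivity
      have hne3 : ((Nat.factorial k : ℚ)) ≠ 0 := by
        exact_mod_cast (Nat.factorial_pos k).ne'
      have hfac : (Nat.factorial (k+1) : ℚ) = ((k:ℚ)+1) * (Nat.factorial k : ℚ) := by
        rw [Nat.factorial_succ]; push_cast; ring
      have : F {k+1} = (1 + (k:ℚ))⁻¹ / (Nat.factorial k : ℚ) / (1 + ((k:ℚ)+1)) := by
        field_simp at e1 ⊢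
        linarith [e1]
      rw [this, hfac]
      push_cast
      field_simp
      ring

/-- The stationary descendent disk-cover invariants in genus 0: a function `F` on finite
multisets of non-negative integers satisfying the initial condition, the divisor equation
and the topological recursion is given by the closed formula
`F(a_1,…,a_n) = (1 + ∑ a_i)^(n-2) / ∏ a_i!`. -/
theorem stmt0 (F : Multiset ℕ → ℚ)
    (h_init : F 0 = 1)
    (h_div : ∀ s : Multiset ℕ, F (0 ::ₘ s) = (1 + (s.sum : ℚ)) * F s)
    (h_trr : ∀ (n : ℕ) (a : Fin (n + 2) → ℕ),
      F ((a 0 + 1) ::ₘ (Finset.univ.erase (0 : Fin (n + 2))).val.map a) =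
        ∑ I ∈ Finset.univ.filter
            (fun I : Finset (Fin (n + 2)) => 0 ∈ I ∧ Fin.last (n + 1) ∉ I),
          (1 + ∑ j ∈ Iᶜ, (a j : ℚ)) * F (I.val.map a) * F (Iᶜ.val.map a)) :
    ∀ (n : ℕ) (a : Fin n → ℕ),
      F (Finset.univ.val.map a) =
        (1 + ∑ i, (a i : ℚ)) ^ ((n : ℤ) - 2) / ∏ i, (Nat.factorial (a i) : ℚ) := by
  intro n
  induction n using Nat.strong_induction_on with
  | _ n ih =>
  intro a
  match n, ih with
  | 0, _ =>
      have h0 : (Finset.univ : Finset (Fin 0)).val.map a = 0 := by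
        simp
      rw [h0, h_init]
      simp
  | 1, _ =>
      have h1 : (Finset.univ : Finset (Fin 1)).val.map a = {a 0} := by
        have : (Finset.univ : Finset (Fin 1)).val = {0} := by decide
        rw [this]; simp
      rw [h1, singletons F h_init h_div h_trr (a 0)]
      have hsum : (∑ i, ((a i : ℚ))) = (a 0 : ℚ) := by
        simp [Fin.sum_univ_one]
      have hprod : (∏ i, ((Nat.factorial (a i) : ℚ))) = (Nat.factorial (a 0) : ℚ) := by
        simp [Fin.prod_univ_one]
      rw [hsum, hprod]
      norm_num
  | (m+2), ih =>
      by_cases ha0 : a 0 = 0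
      · -- divisor equation case
        rw [ms0 a, ha0, h_div, erase_map_succ a, msum_cast]
        rw [ih (m+1) (by omega) (a ∘ Fin.succ)]
        have hS : (∑ i, ((a i : ℚ))) = ∑ j : Fin (m+1), (((a ∘ Fin.succ) j : ℚ)) := by
          rw [Fin.sum_univ_succ, ha0]
          simp [Function.comp]
        have hP : (∏ i, ((Nat.factorial (a i) : ℚ)))
            = ∏ j : Fin (m+1), ((Nat.factorial ((a ∘ Fin.succ) j) : ℚ)) := by
          rw [Fin.prod_univ_succ, ha0]
          simp [Function.comp]
        rw [hS, hP]
        have hbne : (1 : ℚ) + ∑ j : Fin (m+1), (((a ∘ Fin.succ) j : ℚ)) ≠ 0 := by positivity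
        rw [mul_div_assoc']
        congr 1
        rw [mul_comm, ← zpow_add_one₀ hbne]
        congr 1
        push_cast
        ring
      · -- topological recursion case
        obtain ⟨k, hk⟩ : ∃ k, a 0 = k + 1 := ⟨a 0 - 1, by omega⟩
        set b : Fin (m+2) → ℕ := Function.update a 0 k with hb
        have hb0 : b 0 = k := by simp [hb]
        have hbi : ∀ i : Fin (m+2), i ≠ 0 → b i = a i := by
          intro i hi; simp [hb, hi]
        have e1 := h_trr m b
        have hmape : (Finset.univ.erase (0 : Fin (m+2))).val.map b
            = (Finset.univ.erase (0 : Fin (m+2))).val.map a := by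
          apply Multiset.map_congr rfl
          intro i hi
          exact hbi i (Finset.mem_erase.mp (Finset.mem_val.mp hi)).1
        rw [hb0, hmape] at e1
        rw [ms0 a, hk, e1]
        -- closed form for all smaller subsets
        have key : ∀ I : Finset (Fin (m+2)), I.card < m + 2 →
            F (I.val.map b) = (1 + ∑ i ∈ I, ((b i : ℚ))) ^ ((I.card : ℤ) - 2)
              / ∏ i ∈ I, ((Nat.factorial (b i) : ℚ)) := by
          intro I hIc
          obtain ⟨e, he⟩ := finset_as_map I
          have h1 : I.val.map b = Finset.univ.val.map (b ∘ e) := by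
            conv_lhs => rw [← he]
            rw [Finset.map_val, Multiset.map_map]
          have h2 : (∑ i ∈ I, ((b i : ℚ))) = ∑ j, (((b ∘ e) j : ℚ)) := by
            conv_lhs => rw [← he]
            rw [Finset.sum_map]
            rfl
          have h3 : (∏ i ∈ I, ((Nat.factorial (b i) : ℚ)))
              = ∏ j, ((Nat.factorial ((b ∘ e) j) : ℚ)) := by
            conv_lhs => rw [← he]
            rw [Finset.prod_map]
            rfl
          rw [h1, ih I.card hIc (b ∘ e), h2, h3]
        -- notation
        have hlst0 : (Fin.last (m+1)) ≠ (0 : Fin (m+2)) := by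
          simp [Fin.ext_iff]
        set K : Finset (Fin (m+2)) := (Finset.univ.erase 0).erase (Fin.last (m+1)) with hKdef
        have hKmem : ∀ i : Fin (m+2), i ∈ K ↔ (i ≠ Fin.last (m+1) ∧ i ≠ 0) := by
          intro i
          simp [hKdef, Finset.mem_erase]
        have h0K : (0 : Fin (m+2)) ∉ K := by simp [hKmem]
        have hlK : (Fin.last (m+1)) ∉ K := by simp [hKmem]
        have hcarde : (Finset.univ.erase (0:Fin (m+2))).card = m + 1 := by
          rw [Finset.card_erase_of_mem (Finset.mem_univ 0)]
          simp
        have hKcard : K.card = m := by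
          rw [hKdef, Finset.card_erase_of_mem (by simp [Finset.mem_erase, hlst0]), hcarde]
          omega
        set Pall : ℚ := ∏ i, ((Nat.factorial (b i) : ℚ)) with hPall
        have hPallne : Pall ≠ 0 := by
          rw [hPall]
          apply Finset.prod_ne_zero_iff.mpr
          intro i _
          exact_mod_cast (Nat.factorial_pos (b i)).ne'
        set x : ℚ := (k : ℚ) + 1 with hx
        have hxne : x ≠ 0 := by positivity
        set y : ℚ := 1 + (b (Fin.last (m+1)) : ℚ) with hy
        -- Step A+B: rewrite the sum as a Hurwitz sum
        have stepAB : ∑ I ∈ Finset.univ.filter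
              (fun I : Finset (Fin (m+2)) => 0 ∈ I ∧ Fin.last (m + 1) ∉ I),
            (1 + ∑ j ∈ Iᶜ, ((b j : ℚ))) * F (I.val.map b) * F (Iᶜ.val.map b)
            = ∑ T ∈ K.powerset,
              (x + ∑ i ∈ T, ((b i : ℚ)))^((T.card : ℤ) - 1)
                * (y + ∑ i ∈ K \ T, ((b i : ℚ)))^((K \ T).card) / Pall := by
          refine Finset.sum_bij' (fun I _ => I.erase 0) (fun T _ => insert 0 T)
            ?_ ?_ ?_ ?_ ?_
          · -- hi : maps into powerset
            intro I hI
            rw [Finset.mem_filter] at hI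
            rw [Finset.mem_powerset]
            intro i hi
            rw [Finset.mem_erase] at hi
            rw [hKmem]
            refine ⟨?_, hi.1⟩
            rintro rfl
            exact hI.2.2 hi.2
          · -- hj
            intro T hT
            rw [Finset.mem_powerset] at hT
            rw [Finset.mem_filter]
            refine ⟨Finset.mem_univ _, Finset.mem_insert_self _ _, ?_⟩
            intro hmem
            rcases Finset.mem_insert.mp hmem with h | h
            · exact hlst0 h
            · exact hlK (hT h)
          · -- left inverse
            intro I hI
            rw [Finset.mem_filter] at hI
            exact Finset.insert_erase hI.2.1
          · -- right inverse
            intro T hT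
            rw [Finset.mem_powerset] at hT
            exact Finset.erase_insert (fun h => h0K (hT h))
          · -- term equality
            intro I hI
            rw [Finset.mem_filter] at hI
            obtain ⟨-, h0I, hlI⟩ := hI
            have hIc : I.card < m + 2 := by
              have : I ≠ Finset.univ := fun h => hlI (h ▸ Finset.mem_univ _)
              have := Finset.card_lt_card (Finset.ssubset_univ_iff.mpr this)
              simpa using this
            have hIcc : Iᶜ.card < m + 2 := by
              have : Iᶜ ≠ Finset.univ := by
                intro h
                have : (0 : Fin (m+2)) ∈ Iᶜ := h ▸ Finset.mem_univ _
                exact (Finset.mem_compl.mp this) h0I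
              have := Finset.card_lt_card (Finset.ssubset_univ_iff.mpr this)
              simpa using this
            rw [key I hIc, key Iᶜ hIcc]
            -- complement structure
            have hcomp : Iᶜ = insert (Fin.last (m+1)) (K \ (I.erase 0)) := by
              ext i
              rw [Finset.mem_compl, Finset.mem_insert, Finset.mem_sdiff, hKmem,
                Finset.mem_erase]
              by_cases hil : i = Fin.last (m+1)
              · subst hil
                simp [hlI]
              · by_cases hi0 : i = 0
                · subst hi0
                  simp [h0I, Ne.symm hlst0, hil]
                · simp [hil, hi0]
            have hlKT : Fin.last (m+1) ∉ K \ (I.erase 0) := by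
              intro h
              exact hlK (Finset.mem_sdiff.mp h).1
            have h0Ie : (0 : Fin (m+2)) ∉ I.erase 0 := fun h => (Finset.mem_erase.mp h).1 rfl
            have hScomp : (∑ j ∈ Iᶜ, ((b j : ℚ)))
                = (b (Fin.last (m+1)) : ℚ) + ∑ i ∈ K \ (I.erase 0), ((b i : ℚ)) := by
              rw [hcomp, Finset.sum_insert hlKT]
            have hSI : (∑ i ∈ I, ((b i : ℚ))) = (k : ℚ) + ∑ i ∈ I.erase 0, ((b i : ℚ)) := by
              rw [← Finset.add_sum_erase _ _ h0I, hb0]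
            have hccard : Iᶜ.card = (K \ (I.erase 0)).card + 1 := by
              rw [hcomp, Finset.card_insert_of_notMem hlKT]
            have hIcard : I.card = (I.erase 0).card + 1 := by
              rw [Finset.card_erase_of_mem h0I]
              have : 1 ≤ I.card := Finset.card_pos.mpr ⟨0, h0I⟩
              omega
            have hcompne : (1 : ℚ) + ∑ j ∈ Iᶜ, ((b j : ℚ)) ≠ 0 := by
              have : (0:ℚ) ≤ ∑ j ∈ Iᶜ, ((b j : ℚ)) :=
                Finset.sum_nonneg (fun j _ => by positivity)
              positivity
            have hPsplit : (∏ i ∈ I, ((Nat.factorial (b i) : ℚ)))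
                * ∏ i ∈ Iᶜ, ((Nat.factorial (b i) : ℚ)) = Pall := by
              rw [hPall]
              exact Finset.prod_mul_prod_compl I _
            have hPIne : (∏ i ∈ I, ((Nat.factorial (b i) : ℚ))) ≠ 0 := by
              apply Finset.prod_ne_zero_iff.mpr
              intro i _
              exact_mod_cast (Nat.factorial_pos (b i)).ne'
            have hPIcne : (∏ i ∈ Iᶜ, ((Nat.factorial (b i) : ℚ))) ≠ 0 := by
              apply Finset.prod_ne_zero_iff.mpr
              intro i _
              exact_mod_cast (Nat.factorial_pos (b i)).ne'
            -- assemble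
            rw [hSI, hScomp]
            rw [show (1:ℚ) + ((k:ℚ) + ∑ i ∈ I.erase 0, ((b i : ℚ)))
                = x + ∑ i ∈ I.erase 0, ((b i : ℚ)) by rw [hx]; ring]
            rw [show (1:ℚ) + ((b (Fin.last (m+1)) : ℚ) + ∑ i ∈ K \ (I.erase 0), ((b i : ℚ)))
                = y + ∑ i ∈ K \ (I.erase 0), ((b i : ℚ)) by rw [hy]; ring]
            rw [show ((I.card : ℤ) - 2) = ((I.erase 0).card : ℤ) - 1 by rw [hIcard]; push_cast; ring]
            set u : ℚ := x + ∑ i ∈ I.erase 0, ((b i : ℚ)) with hu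
            set v : ℚ := y + ∑ i ∈ K \ (I.erase 0), ((b i : ℚ)) with hv
            have hvne : v ≠ 0 := by
              rw [hv, hy]
              rw [show (1:ℚ) + (b (Fin.last (m+1)) : ℚ) + ∑ i ∈ K \ (I.erase 0), ((b i : ℚ))
                = 1 + ((b (Fin.last (m+1)) : ℚ) + ∑ i ∈ K \ (I.erase 0), ((b i : ℚ))) by ring]
              have h1 : (0:ℚ) ≤ (b (Fin.last (m+1)) : ℚ) := by positivity
              have h2 : (0:ℚ) ≤ ∑ i ∈ K \ (I.erase 0), ((b i : ℚ)) :=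
                Finset.sum_nonneg (fun j _ => by positivity)
              positivity
            have hzp : v * (v ^ ((Iᶜ.card : ℤ) - 2)) = v ^ (((K \ (I.erase 0)).card : ℕ) : ℤ) := by
              rw [← zpow_one_add₀ hvne]
              congr 1
              rw [hccard]
              push_cast
              ring
            calc v * (u ^ (((I.erase 0).card : ℤ) - 1) / ∏ i ∈ I, ((Nat.factorial (b i) : ℚ)))
                  * (v ^ ((Iᶜ.card : ℤ) - 2) / ∏ i ∈ Iᶜ, ((Nat.factorial (b i) : ℚ)))
                = (u ^ (((I.erase 0).card : ℤ) - 1)) * (v * v ^ ((Iᶜ.card : ℤ) - 2))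
                    / ((∏ i ∈ I, ((Nat.factorial (b i) : ℚ)))
                      * ∏ i ∈ Iᶜ, ((Nat.factorial (b i) : ℚ))) := by
                  ring
              _ = (u ^ (((I.erase 0).card : ℤ) - 1)) * (v ^ (((K \ (I.erase 0)).card : ℕ) : ℤ)) / Pall := by
                  rw [hzp, hPsplit]
              _ = u ^ (((I.erase 0).card : ℤ) - 1) * v ^ ((K \ (I.erase 0)).card) / Pall := by
                  rw [zpow_natCast]
        rw [stepAB, ← Finset.sum_div, hurwitz_zpow (fun i => ((b i : ℚ))) K x y hxne]
        -- final algebra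
        have hSa : (1 : ℚ) + ∑ i, ((a i : ℚ)) = x + y + ∑ i ∈ K, ((b i : ℚ)) := by
          rw [← Finset.add_sum_erase _ _ (Finset.mem_univ (0 : Fin (m+2)))]
          have hmem2 : Fin.last (m+1) ∈ Finset.univ.erase (0 : Fin (m+2)) := by
            simp [Finset.mem_erase, hlst0]
          rw [← Finset.add_sum_erase _ _ hmem2, ← hKdef]
          have hsame : ∑ i ∈ K, ((a i : ℚ)) = ∑ i ∈ K, ((b i : ℚ)) := by
            apply Finset.sum_congr rfl
            intro i hi
            rw [hbi i ((hKmem i).mp hi).2]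
          have hlab : a (Fin.last (m+1)) = b (Fin.last (m+1)) := by
            rw [hbi _ hlst0]
          rw [hsame, hlab, hk, hx, hy]
          push_cast
          ring
        have hPa : (∏ i, ((Nat.factorial (a i) : ℚ))) = ((k:ℚ) + 1) * Pall := by
          rw [hPall, ← Finset.mul_prod_erase _ _ (Finset.mem_univ (0 : Fin (m+2))),
            ← Finset.mul_prod_erase _ (fun i => ((Nat.factorial (b i) : ℚ)))
              (Finset.mem_univ (0 : Fin (m+2)))]
          have hsame : ∏ i ∈ Finset.univ.erase 0, ((Nat.factorial (a i) : ℚ))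
              = ∏ i ∈ Finset.univ.erase 0, ((Nat.factorial (b i) : ℚ)) := by
            apply Finset.prod_congr rfl
            intro i hi
            rw [hbi i (Finset.mem_erase.mp hi).1]
          rw [hsame, hk, hb0, Nat.factorial_succ]
          push_cast
          ring
        rw [hSa, hPa, hKcard]
        rw [show (((m+2 : ℕ) : ℤ) - 2) = ((m : ℕ) : ℤ) by push_cast; ring]
        rw [zpow_natCast]
        rw [div_div, hx]
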